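/- Define m_{p,q,a}(x) = 1/(1 − p·x²·g_{a,q}(x)) where g_{a,q} = 1/(1 − ax − q·x²·g_{a,q}) with constant term 1. Then the reversion of m_{p,q,a} equals m_{−p, q−p, a}: Rev(m_{p,q,a})(x) = 1/(1 + p·x²·g_{a,q−p}(x)). -/

import Mathlib

open PowerSeries

/-- Composition (substitution) of formal power series, meaningful when the
second argument has zero constant term. -/
noncomputable def psComp {K : Type*} [Field K] (f g : K⟦X⟧) : K⟦X⟧ :=
  PowerSeries.mk fun n => ∑ k ∈ Finset.range (n + 1), coeff k f * coeff n (g ^ k)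

/-- The `s`-INVERT transform: `g(x) ↦ g(x)/(1 - s·x·g(x))`. -/
noncomputable def invertT {K : Type*} [Field K] (s : K) (g : K⟦X⟧) : K⟦X⟧ :=
  g * (1 - C s * X * g)⁻¹

/-- The mean-INVERT transform: `g(x) ↦ g(x)/(1 - r·x²·g(x)²)`. -/
noncomputable def minvertT {K : Type*} [Field K] (r : K) (g : K⟦X⟧) : K⟦X⟧ :=
  g * (1 - C r * X ^ 2 * g ^ 2)⁻¹

section RevAux

variable {K : Type*} [Field K]

lemma coeff_psComp (f g : K⟦X⟧) (n : ℕ) :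
    coeff n (psComp f g) = ∑ k ∈ Finset.range (n+1), coeff k f * coeff n (g^k) := by
  simp [psComp]

lemma coeff_pow_eq_zero {g : K⟦X⟧} (hg : constantCoeff g = 0) {n k : ℕ} (h : n < k) :
    coeff n (g ^ k) = 0 := by
  obtain ⟨u, hu⟩ : (X : K⟦X⟧) ∣ g := X_dvd_iff.mpr hg
  obtain ⟨v, hv⟩ : (X : K⟦X⟧)^k ∣ g^k := pow_dvd_pow_of_dvd ⟨u, hu⟩ k
  rw [hv, coeff_X_pow_mul' v k n, if_neg (by omega)]

lemma psComp_C (c : K) (g : K⟦X⟧) : psComp (C c) g = C c := by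
  ext n
  rw [coeff_psComp, Finset.sum_eq_single 0]
  · simp [coeff_C, PowerSeries.coeff_one]
  · intro k _ hk; simp [coeff_C, hk]
  · intro h; simp at h

lemma psComp_one (g : K⟦X⟧) : psComp 1 g = 1 := by
  have := psComp_C (1 : K) g; simpa using this

lemma psComp_X {g : K⟦X⟧} (hg : constantCoeff g = 0) : psComp X g = g := by
  ext n
  rw [coeff_psComp]
  rcases n with _ | m
  · simp [coeff_X, coeff_zero_eq_constantCoeff, hg]
  · rw [Finset.sum_eq_single 1]
    · simp [coeff_X]
    · intro k _ hk; simp [coeff_X, hk]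
    · intro h; simp at h

lemma psComp_add (f₁ f₂ g : K⟦X⟧) : psComp (f₁ + f₂) g = psComp f₁ g + psComp f₂ g := by
  ext n
  simp [coeff_psComp, add_mul, Finset.sum_add_distrib]

lemma psComp_sub (f₁ f₂ g : K⟦X⟧) : psComp (f₁ - f₂) g = psComp f₁ g - psComp f₂ g := by
  ext n
  simp [coeff_psComp, sub_mul, Finset.sum_sub_distrib]

lemma triangle_sum {M : Type*} [AddCommMonoid M] (n : ℕ) (F : ℕ × ℕ → M)
    (hF : ∀ p : ℕ × ℕ, n < p.1 + p.2 → F p = 0) :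
    ∑ k ∈ Finset.range (n+1), ∑ p ∈ Finset.HasAntidiagonal.antidiagonal k, F p =
    ∑ p ∈ Finset.range (n+1) ×ˢ Finset.range (n+1), F p := by
  rw [← Finset.sum_biUnion]
  · apply Finset.sum_subset
    · intro p hp
      simp only [Finset.mem_biUnion, Finset.mem_range, Finset.HasAntidiagonal.mem_antidiagonal] at hp
      obtain ⟨k, hk, hpk⟩ := hp
      simp only [Finset.mem_product, Finset.mem_range]
      omega
    · intro p _ hnp
      apply hF
      simp only [Finset.mem_biUnion, Finset.mem_range, Finset.HasAntidiagonal.mem_antidiagonal] at hnp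
      by_contra h
      push_neg at h
      exact hnp ⟨p.1 + p.2, by omega, rfl⟩
  · intro i _ j _ hij
    simp only [Finset.disjoint_left, Finset.HasAntidiagonal.mem_antidiagonal]
    intro p hp hq
    exact hij (hp.symm.trans hq)

lemma psComp_mul {g : K⟦X⟧} (hg : constantCoeff g = 0) (f₁ f₂ : K⟦X⟧) :
    psComp (f₁ * f₂) g = psComp f₁ g * psComp f₂ g := by
  ext n
  rw [coeff_psComp, PowerSeries.coeff_mul]
  -- RHS : ∑ w ∈ antidiagonal n, coeff w.1 (psComp f₁ g) * coeff w.2 (psComp f₂ g)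
  have step1 : ∑ k ∈ Finset.range (n+1), coeff k (f₁ * f₂) * coeff n (g^k)
      = ∑ k ∈ Finset.range (n+1), ∑ p ∈ Finset.HasAntidiagonal.antidiagonal k,
          coeff p.1 f₁ * coeff p.2 f₂ * coeff n (g ^ (p.1 + p.2)) := by
    refine Finset.sum_congr rfl fun k _ => ?_
    rw [PowerSeries.coeff_mul, Finset.sum_mul]
    refine Finset.sum_congr rfl fun p hp => ?_
    rw [Finset.HasAntidiagonal.mem_antidiagonal] at hp
    rw [hp]
  rw [step1, triangle_sum n _ (fun p hp => by
    rw [coeff_pow_eq_zero hg hp, mul_zero])]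
  have step2 : ∀ p ∈ Finset.range (n+1) ×ˢ Finset.range (n+1),
      coeff p.1 f₁ * coeff p.2 f₂ * coeff n (g ^ (p.1 + p.2))
      = ∑ w ∈ Finset.HasAntidiagonal.antidiagonal n,
          (coeff p.1 f₁ * coeff w.1 (g ^ p.1)) * (coeff p.2 f₂ * coeff w.2 (g ^ p.2)) := by
    intro p _
    rw [pow_add, PowerSeries.coeff_mul, Finset.mul_sum]
    refine Finset.sum_congr rfl fun w _ => by ring
  rw [Finset.sum_congr rfl step2, Finset.sum_comm]
  refine Finset.sum_congr rfl fun w hw => ?_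
  rw [Finset.HasAntidiagonal.mem_antidiagonal] at hw
  rw [Finset.sum_product]
  have e1 : (∑ k ∈ Finset.range (w.1+1), coeff k f₁ * coeff w.1 (g^k))
      = ∑ k ∈ Finset.range (n+1), coeff k f₁ * coeff w.1 (g^k) := by
    apply Finset.sum_subset (Finset.range_subset_range.mpr (by omega))
    intro i _ hi
    rw [Finset.mem_range, not_lt] at hi
    rw [coeff_pow_eq_zero hg (by omega), mul_zero]
  have e2 : (∑ k ∈ Finset.range (w.2+1), coeff k f₂ * coeff w.2 (g^k))
      = ∑ k ∈ Finset.range (n+1), coeff k f₂ * coeff w.2 (g^k) := by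
    apply Finset.sum_subset (Finset.range_subset_range.mpr (by omega))
    intro j _ hj
    rw [Finset.mem_range, not_lt] at hj
    rw [coeff_pow_eq_zero hg (by omega), mul_zero]
  rw [coeff_psComp, coeff_psComp, e1, e2, Finset.sum_mul_sum]

lemma psComp_pow {g : K⟦X⟧} (hg : constantCoeff g = 0) (f : K⟦X⟧) (k : ℕ) :
    psComp (f ^ k) g = (psComp f g) ^ k := by
  induction k with
  | zero => simpa using psComp_one g
  | succ m ih => rw [pow_succ, psComp_mul hg, ih, pow_succ]

end RevAux

section
variable {K : Type*} [Field K]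
end

theorem rev_free_meixner {K : Type*} [Field K] [CharZero K] (p q a : K) (G G' : K⟦X⟧)
    (hG0 : constantCoeff G = 1)
    (hG : G * (1 - C a * X - C q * X ^ 2 * G) = 1)
    (hG'0 : constantCoeff G' = 1)
    (hG' : G' * (1 - C a * X - C (q - p) * X ^ 2 * G') = 1) :
    psComp (X * (1 - C p * X ^ 2 * G)⁻¹) (X * (1 + C p * X ^ 2 * G')⁻¹) = X := by
  set D : K⟦X⟧ := 1 + C p * X ^ 2 * G' with hDdef
  have hD0 : constantCoeff D = 1 := by simp [hDdef]
  have hD : D * D⁻¹ = 1 :=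
    PowerSeries.mul_inv_cancel _ (by rw [hD0]; exact one_ne_zero)
  set N : K⟦X⟧ := X * D⁻¹ with hNdef
  have hN0 : constantCoeff N = 0 := by simp [hNdef]
  have hB : (1 - C p * X ^ 2 * G) * (1 - C p * X ^ 2 * G)⁻¹ = 1 :=
    PowerSeries.mul_inv_cancel _ (by simp)
  have hGN : psComp G N * (1 - C a * N - C q * N ^ 2 * psComp G N) = 1 := by
    have h := congrArg (fun f => psComp f N) hG
    simp only [psComp_mul hN0, psComp_sub, psComp_one, psComp_C, psComp_pow hN0,
      psComp_X hN0] at h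
    linear_combination h
  have hH : (G' * D) * (1 - C a * N - C q * N ^ 2 * (G' * D)) = 1 := by
    rw [hDdef] at hD
    rw [hNdef, hDdef]
    have hG'' := hG'
    rw [map_sub] at hG''
    linear_combination hG'' + (-(C a * X * G') - C q * X ^ 2 * G' ^ 2 *
      ((1 + C p * X ^ 2 * G') * (1 + C p * X ^ 2 * G')⁻¹ + 1)) * hD
  have huniq : psComp G N = G' * D := by
    have key : (psComp G N - G' * D) *
        (1 - C a * N - C q * N ^ 2 * (psComp G N + G' * D)) = 0 := by
      linear_combination hGN - hH
    rcases mul_eq_zero.mp key with h | h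
    · exact sub_eq_zero.mp h
    · exfalso
      have hc := congrArg (constantCoeff) h
      simp [map_sub, map_mul, map_pow, hN0] at hc
  have hEA : psComp (1 - C p * X ^ 2 * G) N *
      psComp (1 - C p * X ^ 2 * G)⁻¹ N = 1 := by
    rw [← psComp_mul hN0, hB, psComp_one]
  have hE : psComp (1 - C p * X ^ 2 * G) N = 1 - C p * N ^ 2 * (G' * D) := by
    simp only [psComp_sub, psComp_one, psComp_mul hN0, psComp_C, psComp_pow hN0, psComp_X hN0]
    linear_combination (-(C p * N ^ 2)) * huniq
  have hXE : X * (1 - C p * N ^ 2 * (G' * D)) = N := by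
    rw [hDdef] at hD
    rw [hNdef, hDdef]
    linear_combination (-(C p * X ^ 3 * G' * (1 + C p * X ^ 2 * G')⁻¹) - X) * hD
  rw [psComp_mul hN0, psComp_X hN0]
  calc N * psComp (1 - C p * X ^ 2 * G)⁻¹ N
      = (X * psComp (1 - C p * X ^ 2 * G) N) * psComp (1 - C p * X ^ 2 * G)⁻¹ N := by
        rw [hE, hXE]
    _ = X := by rw [mul_assoc, hEA, mul_one]
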